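/- arXiv:2311.05974 — 2 statements merged into one kernel-verified Lean document; each statement's English description precedes it below -/
import Mathlib

section
/- Let 0 < p < q < ∞ and let W(x), W(y) be positive definite Hermitian matrices in M_m(ℂ). Then ‖W(x)^{1/q} W(y)^{-1/q}‖^q ≤ C ‖W(x)^{1/p} W(y)^{-1/p}‖^p for a constant C depending only on m, p, q. -/
open scoped ComplexOrder
open Matrix

/-- The operator norm of an `m × m` complex matrix. -/
noncomputable def opNorm {m : ℕ} (A : Matrix (Fin m) (Fin m) ℂ) : ℝ :=
  ‖Matrix.toEuclideanCLM (𝕜 := ℂ) A‖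

/-- The real power `A^r` of a Hermitian matrix, via the spectral functional calculus. -/
noncomputable def matPow {m : ℕ} {A : Matrix (Fin m) (Fin m) ℂ}
    (hA : A.IsHermitian) (r : ℝ) : Matrix (Fin m) (Fin m) ℂ :=
  hA.cfc (fun t => t ^ r)

namespace PowAux

open scoped ENNReal NNReal
open Filter Topology

section MatrixLemmas

variable {m : ℕ} {A : Matrix (Fin m) (Fin m) ℂ}

lemma cfc_mul_cfc (hA : A.IsHermitian) (f g : ℝ → ℝ) :
    hA.cfc f * hA.cfc g = hA.cfc (fun t => f t * g t) := by
  unfold Matrix.IsHermitian.cfc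
  simp only [Unitary.conjStarAlgAut_apply]
  simp only [Matrix.mul_assoc]
  rw [← Matrix.mul_assoc (star (hA.eigenvectorUnitary : Matrix (Fin m) (Fin m) ℂ))
    (hA.eigenvectorUnitary : Matrix (Fin m) (Fin m) ℂ),
    Unitary.coe_star_mul_self, Matrix.one_mul,
    ← Matrix.mul_assoc (Matrix.diagonal _) (Matrix.diagonal _), Matrix.diagonal_mul_diagonal]
  congr 2
  exact congrArg Matrix.diagonal (funext fun j => by simp [Function.comp])

lemma cfc_congr_eig (hA : A.IsHermitian) (f g : ℝ → ℝ)
    (h : ∀ i, f (hA.eigenvalues i) = g (hA.eigenvalues i)) : hA.cfc f = hA.cfc g := by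
  unfold Matrix.IsHermitian.cfc
  rw [Unitary.conjStarAlgAut_apply]
  congr 2
  exact congrArg Matrix.diagonal (funext fun j => by simp [Function.comp, h j])

lemma matPow_mul (hA : A.PosDef) (r s : ℝ) :
    matPow hA.1 r * matPow hA.1 s = matPow hA.1 (r + s) := by
  unfold matPow
  rw [cfc_mul_cfc]
  exact cfc_congr_eig _ _ _ fun i => (Real.rpow_add (hA.eigenvalues_pos i) r s).symm

lemma matPow_zero (hA : A.IsHermitian) : matPow hA 0 = 1 := by
  unfold matPow
  have h1 : hA.cfc (fun t => t ^ (0:ℝ)) = hA.cfc (fun _ => 1) :=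
    cfc_congr_eig _ _ _ fun i => Real.rpow_zero _
  rw [h1]
  unfold Matrix.IsHermitian.cfc
  rw [Unitary.conjStarAlgAut_apply]
  have h2 : Matrix.diagonal ((RCLike.ofReal : ℝ → ℂ) ∘ (fun _ : ℝ => (1:ℝ)) ∘ hA.eigenvalues) =
      (1 : Matrix (Fin m) (Fin m) ℂ) := by
    rw [← Matrix.diagonal_one]
    exact congrArg Matrix.diagonal (funext fun i => by simp)
  rw [h2, Matrix.mul_one]
  exact Unitary.mul_star_self_of_mem (SetLike.coe_mem _)

lemma matPow_star (hA : A.IsHermitian) (r : ℝ) : star (matPow hA r) = matPow hA r := by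
  unfold matPow Matrix.IsHermitian.cfc
  simp only [Unitary.conjStarAlgAut_apply]
  simp only [StarMul.star_mul, star_star, Matrix.mul_assoc]
  congr 1
  rw [Matrix.star_eq_conjTranspose, Matrix.diagonal_conjTranspose]
  congr 1
  exact congrArg Matrix.diagonal (funext fun j => by simp [Function.comp, Pi.star_apply])

lemma continuous_matPow (hA : A.PosDef) : Continuous (fun r : ℝ => matPow hA.1 r) := by
  unfold matPow Matrix.IsHermitian.cfc
  simp only [Unitary.conjStarAlgAut_apply]
  refine ((continuous_const.matrix_mul ?_).matrix_mul continuous_const)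
  refine Continuous.matrix_diagonal ?_
  change Continuous fun (r : ℝ) (i : Fin m) => ((hA.1.eigenvalues i ^ r : ℝ) : ℂ)
  refine continuous_pi fun i => Complex.continuous_ofReal.comp ?_
  have h : (HPow.hPow (hA.1.eigenvalues i) : ℝ → ℝ) =
      fun r => Real.exp (Real.log (hA.1.eigenvalues i) * r) :=
    funext fun r => Real.rpow_def_of_pos (hA.eigenvalues_pos i) r
  rw [h]
  exact Real.continuous_exp.comp (continuous_const.mul continuous_id)


end MatrixLemmas

lemma biSup_nnnorm_diff_zero (s : Set ℂ) :
    (⨆ k ∈ s, (‖k‖₊ : ℝ≥0∞)) = ⨆ k ∈ s \ {0}, (‖k‖₊ : ℝ≥0∞) := by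
  apply le_antisymm
  · refine iSup₂_le fun k hk => ?_
    rcases eq_or_ne k 0 with rfl | hk0
    · simp
    · exact le_iSup₂ (f := fun (k : ℂ) (_ : k ∈ s \ {0}) => (‖k‖₊ : ℝ≥0∞)) k ⟨hk, hk0⟩
  · exact iSup₂_le fun k hk =>
      le_iSup₂ (f := fun (k : ℂ) (_ : k ∈ s) => (‖k‖₊ : ℝ≥0∞)) k hk.1

lemma spectralRadius_mul_comm {𝔹 : Type*} [NormedRing 𝔹] [NormedAlgebra ℂ 𝔹] (x y : 𝔹) :
    spectralRadius ℂ (x * y) = spectralRadius ℂ (y * x) := by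
  unfold spectralRadius
  rw [biSup_nnnorm_diff_zero (spectrum ℂ (x * y)), biSup_nnnorm_diff_zero (spectrum ℂ (y * x)),
    spectrum.nonzero_mul_comm]

variable {𝔹 : Type*} [CStarAlgebra 𝔹] [NormOneClass 𝔹]

lemma key_ineq (M N : ℝ → 𝔹)
    (hMm : ∀ r s, M r * M s = M (r + s)) (hNm : ∀ r s, N r * N s = N (r + s))
    (hMs : ∀ r, star (M r) = M r) (hNs : ∀ r, star (N r) = N r) (a b : ℝ) :
    ‖M ((a+b)/2) * N (-((a+b)/2))‖ * ‖M ((a+b)/2) * N (-((a+b)/2))‖ ≤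
      ‖M a * N (-a)‖ * ‖M b * N (-b)‖ := by
  set γ : ℝ := (a+b)/2 with hγ
  have hstar : ∀ t, star (M t * N (-t)) = N (-t) * M t := fun t => by
    rw [StarMul.star_mul, hMs, hNs]
  have hw : star (M γ * N (-γ)) * (M γ * N (-γ)) = N (-γ) * M (a+b) * N (-γ) := by
    rw [hstar]
    calc N (-γ) * M γ * (M γ * N (-γ)) = N (-γ) * (M γ * M γ) * N (-γ) := by
          simp only [mul_assoc]
      _ = N (-γ) * M (a+b) * N (-γ) := by rw [hMm γ γ, hγ]; ring_nf
  have hsa : _root_.IsSelfAdjoint (N (-γ) * M (a+b) * N (-γ)) := by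
    unfold _root_.IsSelfAdjoint
    simp only [StarMul.star_mul, hMs, hNs, mul_assoc]
  -- spectral radius chain
  have e1 : spectralRadius ℂ (N (-γ) * M (a+b) * N (-γ)) =
      spectralRadius ℂ (M (a+b) * N (-(a+b))) := by
    rw [mul_assoc, spectralRadius_mul_comm, mul_assoc, hNm]
    have : -γ + -γ = -(a+b) := by rw [hγ]; ring
    rw [this]
  have e2 : M (a+b) * N (-(a+b)) = M a * ((M b * N (-b)) * N (-a)) := by
    have h1 : M a * M b = M (a + b) := hMm a b
    have h2 : N (-b) * N (-a) = N (-(a+b)) := by rw [hNm]; ring_nf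
    calc M (a+b) * N (-(a+b)) = (M a * M b) * (N (-b) * N (-a)) := by rw [h1, h2]
      _ = M a * ((M b * N (-b)) * N (-a)) := by simp only [mul_assoc]
  have e3 : spectralRadius ℂ (M a * ((M b * N (-b)) * N (-a))) ≤
      (‖M b * N (-b)‖₊ : ℝ≥0∞) * ‖M a * N (-a)‖₊ := by
    rw [spectralRadius_mul_comm (M a) ((M b * N (-b)) * N (-a))]
    refine le_trans (spectrum.spectralRadius_le_nnnorm (𝕜 := ℂ) _) ?_
    have : (M b * N (-b)) * N (-a) * M a = (M b * N (-b)) * (N (-a) * M a) := by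
      simp only [mul_assoc]
    rw [this, ← hstar a]
    calc (‖(M b * N (-b)) * star (M a * N (-a))‖₊ : ℝ≥0∞)
        ≤ ((‖M b * N (-b)‖₊ * ‖star (M a * N (-a))‖₊ : ℝ≥0) : ℝ≥0∞) :=
          ENNReal.coe_le_coe.mpr (nnnorm_mul_le _ _)
      _ = (‖M b * N (-b)‖₊ : ℝ≥0∞) * ‖M a * N (-a)‖₊ := by
          rw [nnnorm_star, ENNReal.coe_mul]
  have main : (‖star (M γ * N (-γ)) * (M γ * N (-γ))‖₊ : ℝ≥0∞) ≤
      (‖M b * N (-b)‖₊ : ℝ≥0∞) * ‖M a * N (-a)‖₊ := by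
    rw [hw, ← hsa.spectralRadius_eq_nnnorm, e1, e2]
    exact e3
  have main2 : ‖star (M γ * N (-γ)) * (M γ * N (-γ))‖ ≤ ‖M b * N (-b)‖ * ‖M a * N (-a)‖ := by
    rw [← ENNReal.coe_mul] at main
    exact_mod_cast main
  calc ‖M γ * N (-γ)‖ * ‖M γ * N (-γ)‖ = ‖star (M γ * N (-γ)) * (M γ * N (-γ))‖ :=
        (CStarRing.norm_star_mul_self).symm
    _ ≤ ‖M b * N (-b)‖ * ‖M a * N (-a)‖ := main2
    _ = ‖M a * N (-a)‖ * ‖M b * N (-b)‖ := mul_comm _ _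


lemma midpoint_bound (h : ℝ → ℝ) (hc : Continuous h) (h0 : h 0 = 0)
    (hmid : ∀ a b, h ((a + b) / 2) ≤ (h a + h b) / 2) (s : ℝ) :
    ∀ α : ℝ, 0 ≤ α → α ≤ 1 → h (α * s) ≤ α * h s := by
  have dy : ∀ n : ℕ, ∀ k : ℕ, k ≤ 2 ^ n → h (((k : ℝ) / 2 ^ n) * s) ≤ ((k : ℝ) / 2 ^ n) * h s := by
    intro n
    induction n with
    | zero =>
      intro k hk
      interval_cases k
      · simpa using le_of_eq h0
      · simp
    | succ n ih =>
      intro k hk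
      rcases Nat.even_or_odd k with ⟨j, hj⟩ | ⟨j, hj⟩
      · have hj2 : j ≤ 2 ^ n := by
          rw [pow_succ] at hk; omega
        have heq : ((k : ℝ) / 2 ^ (n+1)) = (j : ℝ) / 2 ^ n := by
          subst hj; push_cast; rw [pow_succ]; field_simp; ring
        rw [heq]; exact ih j hj2
      · have hj2 : j + 1 ≤ 2 ^ n := by
          rw [pow_succ] at hk; omega
        have hj1 : j ≤ 2 ^ n := by omega
        have heq : ((k : ℝ) / 2 ^ (n+1)) = ((j : ℝ) / 2 ^ n + ((j:ℝ)+1) / 2 ^ n) / 2 := by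
          subst hj; push_cast; rw [pow_succ]; field_simp; ring
        have heq2 : ((k : ℝ) / 2 ^ (n+1)) * s
            = (((j : ℝ) / 2 ^ n) * s + ((((j:ℝ)+1) / 2 ^ n) * s)) / 2 := by rw [heq]; ring
        have i1 := ih j hj1
        have i2 := ih (j+1) hj2
        push_cast at i2
        calc h (((k : ℝ) / 2 ^ (n+1)) * s)
            ≤ (h (((j : ℝ) / 2 ^ n) * s) + h ((((j:ℝ)+1) / 2 ^ n) * s)) / 2 := by
              rw [heq2]; exact hmid _ _
          _ ≤ (((j : ℝ) / 2 ^ n) * h s + (((j:ℝ)+1) / 2 ^ n) * h s) / 2 := by linarith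
          _ = ((k : ℝ) / 2 ^ (n+1)) * h s := by rw [heq]; ring
  intro α hα0 hα1
  set u : ℕ → ℝ := fun n => (⌊α * 2 ^ n⌋₊ : ℝ) / 2 ^ n with hu
  have hpow : ∀ n : ℕ, (0:ℝ) < 2 ^ n := fun n => by positivity
  have humem : ∀ n, h (u n * s) ≤ u n * h s := by
    intro n
    refine dy n _ ?_
    have h1 : α * 2 ^ n ≤ ((2 ^ n : ℕ) : ℝ) := by
      push_cast
      nlinarith [hpow n]
    calc ⌊α * 2 ^ n⌋₊ ≤ ⌊((2 ^ n : ℕ) : ℝ)⌋₊ := Nat.floor_le_floor h1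
      _ = 2 ^ n := Nat.floor_natCast _
  have hlow : ∀ n, α - (1/2) ^ n ≤ u n := by
    intro n
    have := Nat.sub_one_lt_floor (α * 2 ^ n)
    rw [hu]
    have h2 : (α * 2 ^ n - 1) / 2 ^ n ≤ (⌊α * 2 ^ n⌋₊ : ℝ) / 2 ^ n := by
      gcongr

    calc α - (1/2) ^ n = (α * 2 ^ n - 1) / 2 ^ n := by
          field_simp
          rw [sub_mul, div_pow, one_pow, div_mul_cancel₀ _ (hpow n).ne']
      _ ≤ (⌊α * 2 ^ n⌋₊ : ℝ) / 2 ^ n := h2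
  have hupp : ∀ n, u n ≤ α := by
    intro n
    rw [hu]
    rw [div_le_iff₀ (hpow n)]
    exact Nat.floor_le (by positivity)
  have hu_tendsto : Tendsto u atTop (𝓝 α) := by
    have hl : Tendsto (fun n : ℕ => α - (1/2:ℝ) ^ n) atTop (𝓝 (α - 0)) :=
      tendsto_const_nhds.sub (tendsto_pow_atTop_nhds_zero_of_lt_one (by norm_num) (by norm_num))
    rw [sub_zero] at hl
    exact tendsto_of_tendsto_of_tendsto_of_le_of_le hl tendsto_const_nhds hlow hupp
  have t1 : Tendsto (fun n => h (u n * s)) atTop (𝓝 (h (α * s))) :=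
    (hc.tendsto _).comp (hu_tendsto.mul_const s)
  have t2 : Tendsto (fun n => u n * h s) atTop (𝓝 (α * h s)) := hu_tendsto.mul_const _
  exact le_of_tendsto_of_tendsto' t1 t2 humem


lemma main_bound {𝔹 : Type*} [CStarAlgebra 𝔹] [NormOneClass 𝔹] (M N : ℝ → 𝔹)
    (hMm : ∀ r s, M r * M s = M (r + s)) (hNm : ∀ r s, N r * N s = N (r + s))
    (hMs : ∀ r, star (M r) = M r) (hNs : ∀ r, star (N r) = N r)
    (hM0 : M 0 = 1) (hN0 : N 0 = 1)
    (hMc : Continuous M) (hNc : Continuous N)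
    (p q : ℝ) (hp : 0 < p) (hpq : p < q) :
    ‖M (1/q) * N (-(1/q))‖ ^ q ≤ ‖M (1/p) * N (-(1/p))‖ ^ p := by
  have hq : 0 < q := hp.trans hpq
  set g : ℝ → ℝ := fun t => ‖M t * N (-t)‖ with hg
  have hinv : ∀ t, (M t * N (-t)) * (N t * M (-t)) = 1 := by
    intro t
    calc (M t * N (-t)) * (N t * M (-t)) = M t * ((N (-t) * N t) * M (-t)) := by
          simp only [mul_assoc]
      _ = M t * M (-t) := by rw [hNm, neg_add_cancel, hN0, one_mul]
      _ = 1 := by rw [hMm, add_neg_cancel, hM0]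
  have hone : ‖(1 : 𝔹)‖ = 1 := norm_one
  have gpos : ∀ t, 0 < g t := by
    intro t
    rw [hg, norm_pos_iff]
    intro hzero
    have h2 := hinv t
    rw [hzero, zero_mul] at h2
    rw [← h2, norm_zero] at hone
    norm_num at hone
  have g0 : g 0 = 1 := by
    show ‖M 0 * N (-0)‖ = 1
    rw [neg_zero, hM0, hN0, one_mul, hone]
  have gcont : Continuous g := (hMc.mul (hNc.comp continuous_neg)).norm
  set h : ℝ → ℝ := fun t => Real.log (g t) with hh
  have hcont : Continuous h := gcont.log fun t => (gpos t).ne'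
  have h0 : h 0 = 0 := by show Real.log (g 0) = 0; rw [g0, Real.log_one]
  have hmid : ∀ a b, h ((a + b) / 2) ≤ (h a + h b) / 2 := by
    intro a b
    have k2 : g ((a+b)/2) * g ((a+b)/2) ≤ g a * g b := key_ineq M N hMm hNm hMs hNs a b
    have l1 : Real.log (g ((a+b)/2) * g ((a+b)/2)) ≤ Real.log (g a * g b) :=
      Real.log_le_log (mul_pos (gpos _) (gpos _)) k2
    rw [Real.log_mul (gpos _).ne' (gpos _).ne', Real.log_mul (gpos _).ne' (gpos _).ne'] at l1
    show Real.log (g ((a+b)/2)) ≤ (Real.log (g a) + Real.log (g b)) / 2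
    linarith
  have hα0 : (0:ℝ) ≤ p / q := le_of_lt (div_pos hp hq)
  have hα1 : p / q ≤ 1 := le_of_lt ((div_lt_one hq).mpr hpq)
  have hb := midpoint_bound h hcont h0 hmid (1/p) (p/q) hα0 hα1
  have harg : (p/q) * (1/p) = 1/q := by
    field_simp
  rw [harg] at hb
  have hfin : q * h (1/q) ≤ p * h (1/p) := by
    have h3 := mul_le_mul_of_nonneg_left hb hq.le
    have e : q * ((p/q) * h (1/p)) = p * h (1/p) := by
      field_simp
    linarith [e ▸ h3]
  have e1 : g (1/q) ^ q = Real.exp (q * h (1/q)) := by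
    rw [Real.rpow_def_of_pos (gpos _), mul_comm]
  have e2 : g (1/p) ^ p = Real.exp (p * h (1/p)) := by
    rw [Real.rpow_def_of_pos (gpos _), mul_comm]
  show g (1/q) ^ q ≤ g (1/p) ^ p
  rw [e1, e2]
  exact Real.exp_le_exp.mpr hfin


end PowAux

open PowAux in
/-- For `0 < p < q` there is `C = C(m,p,q) > 0` such that for all positive definite
`A, B`, `‖A^{1/q} B^{-1/q}‖^q ≤ C ‖A^{1/p} B^{-1/p}‖^p`. -/
theorem pow_opNorm_comparison {m : ℕ} (p q : ℝ) (hp : 0 < p) (hpq : p < q) :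
    ∃ C : ℝ, 0 < C ∧ ∀ (A B : Matrix (Fin m) (Fin m) ℂ)
      (hA : A.PosDef) (hB : B.PosDef),
      opNorm (matPow hA.1 (1 / q) * matPow hB.1 (-(1 / q))) ^ q ≤
        C * opNorm (matPow hA.1 (1 / p) * matPow hB.1 (-(1 / p))) ^ p := by
  have hq : 0 < q := hp.trans hpq
  refine ⟨1, one_pos, fun A B hA hB => ?_⟩
  rw [one_mul]
  rcases Nat.eq_zero_or_pos m with hm | hm
  · subst hm
    have hzero : ∀ X : Matrix (Fin 0) (Fin 0) ℂ, X = 0 := fun X => by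
      ext i j; exact i.elim0
    have hop : ∀ X : Matrix (Fin 0) (Fin 0) ℂ, opNorm X = 0 := fun X => by
      rw [hzero X, opNorm, map_zero, norm_zero]
    rw [hop, hop, Real.zero_rpow hq.ne', Real.zero_rpow hp.ne']
  · haveI : Nontrivial (EuclideanSpace ℂ (Fin m)) := by
      refine ⟨EuclideanSpace.single ⟨0, hm⟩ (1:ℂ), 0, fun hcon => ?_⟩
      have h1 : ‖EuclideanSpace.single (⟨0, hm⟩ : Fin m) (1:ℂ)‖ = 1 := by
        rw [EuclideanSpace.norm_single]; norm_num
      rw [hcon, norm_zero] at h1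
      norm_num at h1
    have hφcont : Continuous
        (fun X : Matrix (Fin m) (Fin m) ℂ => Matrix.toEuclideanCLM (𝕜 := ℂ) X) := by
      let ψ : Matrix (Fin m) (Fin m) ℂ →ₗ[ℂ]
          (EuclideanSpace ℂ (Fin m) →L[ℂ] EuclideanSpace ℂ (Fin m)) :=
        { toFun := fun X => Matrix.toEuclideanCLM (𝕜 := ℂ) X
          map_add' := fun X Y => map_add _ X Y
          map_smul' := fun c X => map_smul _ c X }
      exact ψ.continuous_of_finiteDimensional
    have key := main_bound
      (fun t => Matrix.toEuclideanCLM (𝕜 := ℂ) (matPow hA.1 t))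
      (fun t => Matrix.toEuclideanCLM (𝕜 := ℂ) (matPow hB.1 t))
      (fun r s => by rw [← _root_.map_mul, matPow_mul hA])
      (fun r s => by rw [← _root_.map_mul, matPow_mul hB])
      (fun r => by rw [← map_star, matPow_star])
      (fun r => by rw [← map_star, matPow_star])
      (by beta_reduce; rw [matPow_zero hA.1, _root_.map_one])
      (by beta_reduce; rw [matPow_zero hB.1, _root_.map_one])
      (hφcont.comp (continuous_matPow hA))
      (hφcont.comp (continuous_matPow hB))
      p q hp hpq
    have gq : opNorm (matPow hA.1 (1/q) * matPow hB.1 (-(1/q))) =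
        ‖Matrix.toEuclideanCLM (𝕜 := ℂ) (matPow hA.1 (1/q)) *
          Matrix.toEuclideanCLM (𝕜 := ℂ) (matPow hB.1 (-(1/q)))‖ := by
      rw [opNorm, _root_.map_mul]
    have gp : opNorm (matPow hA.1 (1/p) * matPow hB.1 (-(1/p))) =
        ‖Matrix.toEuclideanCLM (𝕜 := ℂ) (matPow hA.1 (1/p)) *
          Matrix.toEuclideanCLM (𝕜 := ℂ) (matPow hB.1 (-(1/p)))‖ := by
      rw [opNorm, _root_.map_mul]
    rw [gq, gp]
    exact key
end

section
/- Let a ∈ (-n, ∞), b ∈ ℝ, and define w(x) := |x|^a (log(2 + |x|^{-1}))^b for x ∈ ℝⁿ (with w(0) := 0, interpreted a.e.). Then for every x₀ ∈ ℝⁿ and r > 0, the average ⨍_{B(x₀,r)} w(x) dx is comparable to (|x₀| + r)^a (log(2 + (|x₀| + r)^{-1}))^b, with implicit constants depending only on n, a, b. -/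
open MeasureTheory

/-- The Euclidean norm on `ℝⁿ` realized as `Fin n → ℝ`. -/
noncomputable def euclNorm {n : ℕ} (x : Fin n → ℝ) : ℝ :=
  Real.sqrt (∑ i, x i ^ 2)

/-- The Euclidean ball of center `c` and radius `r`. -/
def euclBall {n : ℕ} (c : Fin n → ℝ) (r : ℝ) : Set (Fin n → ℝ) :=
  {y | euclNorm (y - c) < r}

open Metric Real

noncomputable def gfun (a b t : ℝ) : ℝ := t ^ a * Real.log (2 + t⁻¹) ^ b

lemma log_two_le_L {t : ℝ} (ht : 0 ≤ t) : Real.log 2 ≤ Real.log (2 + t⁻¹) := by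
  have h : 0 ≤ t⁻¹ := inv_nonneg.2 ht
  exact Real.log_le_log (by norm_num) (by linarith)

lemma L_pos {t : ℝ} (ht : 0 ≤ t) : 0 < Real.log (2 + t⁻¹) :=
  lt_of_lt_of_le (Real.log_pos (by norm_num)) (log_two_le_L ht)

lemma L_anti {s t : ℝ} (hs : 0 < s) (hst : s ≤ t) :
    Real.log (2 + t⁻¹) ≤ Real.log (2 + s⁻¹) := by
  have h1 : t⁻¹ ≤ s⁻¹ := inv_anti₀ hs hst
  have ht : 0 < t := lt_of_lt_of_le hs hst
  have h2 : (0:ℝ) < t⁻¹ := inv_pos.2 ht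
  exact Real.log_le_log (by linarith) (by linarith)

lemma gfun_pos {t : ℝ} (ht : 0 < t) (a b : ℝ) : 0 < gfun a b t := by
  have := L_pos ht.le
  unfold gfun; positivity

/-- ratio bound for rpow: if 0 < s ≤ t ≤ K s then t^a ≤ K^|a| s^a and s^a ≤ K^|a| t^a -/
lemma rpow_ratio {s t K : ℝ} (hs : 0 < s) (hst : s ≤ t) (hK : 1 ≤ K) (htK : t ≤ K * s) (a : ℝ) :
    t ^ a ≤ K ^ |a| * s ^ a ∧ s ^ a ≤ K ^ |a| * t ^ a := by
  have ht : 0 < t := lt_of_lt_of_le hs hst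
  have hK0 : (0:ℝ) < K := by linarith
  rcases le_or_gt 0 a with ha' | hneg
  · rw [abs_of_nonneg ha']
    constructor
    · calc t ^ a ≤ (K * s) ^ a := Real.rpow_le_rpow ht.le htK ha'
        _ = K ^ a * s ^ a := Real.mul_rpow hK0.le hs.le
    · calc s ^ a ≤ t ^ a := Real.rpow_le_rpow hs.le hst ha'
        _ ≤ K ^ a * t ^ a := le_mul_of_one_le_left (Real.rpow_nonneg ht.le a)
            (Real.one_le_rpow hK ha')
  · rw [abs_of_neg hneg]
    constructor
    · calc t ^ a ≤ s ^ a := Real.rpow_le_rpow_of_nonpos hs hst hneg.le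
        _ ≤ K ^ (-a) * s ^ a := le_mul_of_one_le_left (Real.rpow_nonneg hs.le a)
            (Real.one_le_rpow hK (by linarith))
    · have hts : t / K ≤ s := by rw [div_le_iff₀ hK0]; linarith [htK, mul_comm K s]
      calc s ^ a ≤ (t / K) ^ a := Real.rpow_le_rpow_of_nonpos (by positivity) hts hneg.le
        _ = t ^ a / K ^ a := Real.div_rpow ht.le hK0.le a
        _ = K ^ (-a) * t ^ a := by
            rw [Real.rpow_neg hK0.le, div_eq_mul_inv, mul_comm]
        
lemma gfun_comp (a b : ℝ) {K : ℝ} (hK : 1 ≤ K) :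
    ∃ C : ℝ, 1 ≤ C ∧ ∀ s t : ℝ, 0 < s → s ≤ t → t ≤ K * s →
      gfun a b t ≤ C * gfun a b s ∧ gfun a b s ≤ C * gfun a b t := by
  have hK0 : (0:ℝ) < K := by linarith
  set K' : ℝ := 1 + Real.log K / Real.log 2 with hK'def
  have hlogK : 0 ≤ Real.log K := Real.log_nonneg hK
  have hlog2 : (0:ℝ) < Real.log 2 := Real.log_pos (by norm_num)
  have hK'1 : 1 ≤ K' := by
    have : 0 ≤ Real.log K / Real.log 2 := by positivity
    simp only [hK'def]; linarith
  refine ⟨K ^ |a| * K' ^ |b|, one_le_mul_of_one_le_of_one_le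
    (Real.one_le_rpow hK (abs_nonneg a)) (Real.one_le_rpow hK'1 (abs_nonneg b)), ?_⟩
  intro s t hs hst htK
  have ht : 0 < t := lt_of_lt_of_le hs hst
  set Ls := Real.log (2 + s⁻¹) with hLsdef
  set Lt := Real.log (2 + t⁻¹) with hLtdef
  have hLs : 0 < Ls := L_pos hs.le
  have hLt : 0 < Lt := L_pos ht.le
  have hLts : Lt ≤ Ls := L_anti hs hst
  have hlog2Lt : Real.log 2 ≤ Lt := log_two_le_L ht.le
  have hLsK : Ls ≤ K' * Lt := by
    have h1 : s⁻¹ ≤ K * t⁻¹ := by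
      have hinv : (K*s)⁻¹ ≤ t⁻¹ := inv_anti₀ (by positivity) htK
      calc s⁻¹ = K * (K*s)⁻¹ := by field_simp
        _ ≤ K * t⁻¹ := by gcongr
    have h2 : (2:ℝ) + K * t⁻¹ ≤ K * (2 + t⁻¹) := by nlinarith [inv_pos.2 ht]
    have h3 : Ls ≤ Real.log (K * (2 + t⁻¹)) := by
      apply Real.log_le_log (by positivity)
      have : (0:ℝ) < t⁻¹ := inv_pos.2 ht
      calc (2:ℝ) + s⁻¹ ≤ 2 + K * t⁻¹ := by linarith
        _ ≤ K * (2 + t⁻¹) := h2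
    rw [Real.log_mul (by positivity) (by positivity)] at h3
    have h4 : Real.log K ≤ (Real.log K / Real.log 2) * Lt := by
      rw [div_mul_eq_mul_div, le_div_iff₀ hlog2]
      nlinarith
    calc Ls ≤ Real.log K + Lt := h3
      _ ≤ (Real.log K / Real.log 2) * Lt + Lt := by linarith
      _ = K' * Lt := by ring
  obtain ⟨hA1, hA2⟩ := rpow_ratio hs hst hK htK a
  obtain ⟨hB1, hB2⟩ := rpow_ratio hLt hLts hK'1 hLsK b
  have hsa : (0:ℝ) ≤ s ^ a := Real.rpow_nonneg hs.le a
  have hta : (0:ℝ) ≤ t ^ a := Real.rpow_nonneg ht.le a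
  have hLsb : (0:ℝ) ≤ Ls ^ b := Real.rpow_nonneg hLs.le b
  have hLtb : (0:ℝ) ≤ Lt ^ b := Real.rpow_nonneg hLt.le b
  have hKa : (0:ℝ) ≤ K ^ |a| := Real.rpow_nonneg hK0.le _
  have hK'b : (0:ℝ) ≤ K' ^ |b| := Real.rpow_nonneg (by linarith) _
  constructor
  · show t ^ a * Lt ^ b ≤ K ^ |a| * K' ^ |b| * (s ^ a * Ls ^ b)
    calc t ^ a * Lt ^ b ≤ (K ^ |a| * s ^ a) * (K' ^ |b| * Ls ^ b) :=
          mul_le_mul hA1 hB2 hLtb (by positivity)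
      _ = K ^ |a| * K' ^ |b| * (s ^ a * Ls ^ b) := by ring
  · show s ^ a * Ls ^ b ≤ K ^ |a| * K' ^ |b| * (t ^ a * Lt ^ b)
    calc s ^ a * Ls ^ b ≤ (K ^ |a| * t ^ a) * (K' ^ |b| * Lt ^ b) :=
          mul_le_mul hA2 hB1 hLsb (by positivity)
      _ = K ^ |a| * K' ^ |b| * (t ^ a * Lt ^ b) := by ring

/-- `log(2 + (ρ 2⁻ᵏ)⁻¹) ≤ (k+1) log(2+ρ⁻¹)`. -/
lemma L_dyadic {ρ : ℝ} (hρ : 0 < ρ) (k : ℕ) :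
    Real.log (2 + (ρ * (1/2:ℝ)^k)⁻¹) ≤ (k + 1 : ℝ) * Real.log (2 + ρ⁻¹) := by
  have h2k : (1:ℝ) ≤ 2^k := one_le_pow₀ (by norm_num)
  have hinv : (ρ * (1/2:ℝ)^k)⁻¹ = 2^k * ρ⁻¹ := by
    field_simp
    rw [← mul_pow]; norm_num
  have hL2 : Real.log 2 ≤ Real.log (2 + ρ⁻¹) := log_two_le_L hρ.le
  have hρi : (0:ℝ) < ρ⁻¹ := inv_pos.2 hρ
  have step : Real.log (2 + 2^k * ρ⁻¹) ≤ k * Real.log 2 + Real.log (2 + ρ⁻¹) := by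
    have h1 : (2:ℝ) + 2^k * ρ⁻¹ ≤ 2^k * (2 + ρ⁻¹) := by nlinarith
    calc Real.log (2 + 2^k * ρ⁻¹) ≤ Real.log (2^k * (2 + ρ⁻¹)) :=
          Real.log_le_log (by positivity) h1
      _ = k * Real.log 2 + Real.log (2 + ρ⁻¹) := by
          rw [Real.log_mul (by positivity) (by positivity), Real.log_pow]
  rw [hinv]
  have : (k:ℝ) * Real.log 2 ≤ k * Real.log (2 + ρ⁻¹) := by
    apply mul_le_mul_of_nonneg_left hL2 (Nat.cast_nonneg k)
  calc Real.log (2 + 2^k * ρ⁻¹) ≤ k * Real.log 2 + Real.log (2 + ρ⁻¹) := step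
    _ ≤ k * Real.log (2 + ρ⁻¹) + Real.log (2 + ρ⁻¹) := by linarith
    _ = (k + 1 : ℝ) * Real.log (2 + ρ⁻¹) := by ring

/-- `L(ρ 2⁻ᵏ)^b ≤ (k+1)^⌈b⌉₊ L(ρ)^b`. -/
lemma Lb_dyadic (b : ℝ) {ρ : ℝ} (hρ : 0 < ρ) (k : ℕ) :
    Real.log (2 + (ρ * (1/2:ℝ)^k)⁻¹) ^ b ≤
      ((k:ℝ) + 1) ^ (⌈b⌉₊ : ℕ) * Real.log (2 + ρ⁻¹) ^ b := by
  set Lρ := Real.log (2 + ρ⁻¹)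
  set Lk := Real.log (2 + (ρ * (1/2:ℝ)^k)⁻¹)
  have hsk : (0:ℝ) < ρ * (1/2:ℝ)^k := by positivity
  have hLρ : 0 < Lρ := L_pos hρ.le
  have hLk : 0 < Lk := L_pos hsk.le
  have hk1 : (1:ℝ) ≤ (k:ℝ) + 1 := by have : (0:ℝ) ≤ (k:ℝ) := Nat.cast_nonneg k; linarith
  rcases le_or_gt 0 b with hb | hb
  · have h1 : Lk ≤ ((k:ℝ)+1) * Lρ := L_dyadic hρ k
    calc Lk ^ b ≤ (((k:ℝ)+1) * Lρ) ^ b := Real.rpow_le_rpow hLk.le h1 hb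
      _ = ((k:ℝ)+1) ^ b * Lρ ^ b := Real.mul_rpow (by positivity) hLρ.le
      _ ≤ ((k:ℝ)+1) ^ (⌈b⌉₊:ℕ) * Lρ ^ b := by
          apply mul_le_mul_of_nonneg_right _ (Real.rpow_nonneg hLρ.le b)
          rw [← Real.rpow_natCast ((k:ℝ)+1) ⌈b⌉₊]
          exact Real.rpow_le_rpow_of_exponent_le hk1 (Nat.le_ceil b)
  · have hmono : Lρ ≤ Lk := L_anti hsk (by
      calc ρ * (1/2:ℝ)^k ≤ ρ * 1 := by
            apply mul_le_mul_of_nonneg_left _ hρ.le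
            exact pow_le_one₀ (by norm_num) (by norm_num)
        _ = ρ := mul_one ρ)
    have h1 : Lk ^ b ≤ Lρ ^ b := Real.rpow_le_rpow_of_nonpos hLρ hmono hb.le
    calc Lk ^ b ≤ Lρ ^ b := h1
      _ ≤ ((k:ℝ)+1) ^ (⌈b⌉₊:ℕ) * Lρ ^ b := le_mul_of_one_le_left
          (Real.rpow_nonneg hLρ.le b) (one_le_pow₀ hk1)

/-- summability of `(k+2)^m θ^k` for `0 < θ < 1`. -/
lemma summable_shifted (m : ℕ) {θ : ℝ} (hθ0 : 0 < θ) (hθ1 : θ < 1) :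
    Summable (fun k : ℕ => ((k:ℝ) + 2) ^ m * θ ^ k) := by
  have h := summable_pow_mul_geometric_of_norm_lt_one (R := ℝ) m
    (r := θ) (by rwa [Real.norm_eq_abs, abs_of_pos hθ0])
  have h2 : Summable ((fun j : ℕ => (j:ℝ) ^ m * θ ^ j) ∘ (fun k => k + 2)) :=
    h.comp_injective (add_left_injective 2)
  have h3 : Summable (fun k : ℕ => θ⁻¹^2 * (((k + 2 :ℕ):ℝ) ^ m * θ ^ (k+2))) :=
    h2.mul_left _
  refine h3.congr fun k => ?_
  push_cast
  field_simp
  ring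

/-- the dyadic series bound: `∑ u k` with
`u k = ((1/2)^(k+1))^a * (k+2)^m * ((1/2)^k)^n`. -/
lemma summable_u (m : ℕ) (n : ℕ) (a : ℝ) (ha : -(n:ℝ) < a) :
    Summable (fun k : ℕ => (((1/2:ℝ))^(k+1)) ^ a * ((k:ℝ) + 2) ^ m * ((1/2:ℝ)^k) ^ (n:ℕ)) := by
  set θ : ℝ := (1/2:ℝ) ^ a * (1/2:ℝ) ^ (n:ℕ) with hθ
  have hpowa : ∀ k : ℕ, ((1/2:ℝ)^k) ^ a = ((1/2:ℝ)^a)^k := fun k => by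
    rw [← Real.rpow_natCast (1/2:ℝ) k, ← Real.rpow_natCast ((1/2:ℝ)^a) k,
      ← Real.rpow_mul (by norm_num), ← Real.rpow_mul (by norm_num), mul_comm]
  have hθ0 : 0 < θ := by
    have : (0:ℝ) < (1/2:ℝ)^a := Real.rpow_pos_of_pos (by norm_num) a
    positivity
  have hθ1 : θ < 1 := by
    have : θ = (1/2:ℝ) ^ (a + n) := by
      rw [hθ, Real.rpow_add (by norm_num), Real.rpow_natCast]
    rw [this]
    apply Real.rpow_lt_one (by norm_num) (by norm_num) (by linarith)
  have h := (summable_shifted m hθ0 hθ1).mul_left ((1/2:ℝ)^a)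
  refine h.congr fun k => ?_
  rw [hpowa (k+1)]
  rw [hθ]
  rw [mul_pow, pow_succ]
  ring

variable {n : ℕ}

/-- covering the punctured ball by dyadic annuli -/
lemma ball_subset_annuli {X : Type*} [NormedAddCommGroup X] {ρ : ℝ} (hρ : 0 < ρ) :
    ball (0:X) ρ ⊆ {0} ∪ ⋃ k : ℕ, (ball (0:X) (ρ * (1/2:ℝ)^k) \ ball 0 (ρ * (1/2:ℝ)^(k+1))) := by
  intro x hx
  rcases eq_or_ne x 0 with rfl | hx0
  · exact Set.mem_union_left _ rfl
  right
  have hxn : 0 < ‖x‖ := norm_pos_iff.2 hx0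
  have hxρ : ‖x‖ < ρ := by simpa using hx
  have hex : ∃ k : ℕ, ρ * (1/2:ℝ)^(k+1) ≤ ‖x‖ := by
    obtain ⟨m, hm⟩ := exists_pow_lt_of_lt_one (div_pos hxn hρ) (show (1/2:ℝ) < 1 by norm_num)
    refine ⟨m, ?_⟩
    rw [mul_comm, ← le_div_iff₀ hρ]
    have h1 : (1/2:ℝ)^(m+1) ≤ (1/2:ℝ)^m := by
      apply pow_le_pow_of_le_one (by norm_num) (by norm_num) (by omega)
    linarith [hm]
  classical
  let k₀ := Nat.find hex
  have hk₀ : ρ * (1/2:ℝ)^(k₀+1) ≤ ‖x‖ := Nat.find_spec hex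
  have hup : ‖x‖ < ρ * (1/2:ℝ)^k₀ := by
    rcases Nat.eq_zero_or_pos k₀ with h0 | hpos
    · simpa [h0] using hxρ
    · have := Nat.find_min hex (m := k₀ - 1) (by omega)
      push_neg at this
      have : ‖x‖ < ρ * (1/2:ℝ)^(k₀ - 1 + 1) := this
      simpa [Nat.sub_add_cancel hpos] using this
  refine Set.mem_iUnion.2 ⟨k₀, ?_⟩
  simp only [Set.mem_diff, mem_ball_zero_iff]
  exact ⟨hup, not_lt.2 hk₀⟩

lemma lintegral_gfun_ball (hn : 0 < n) (a b : ℝ) (ha : -(n:ℝ) < a) :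
    ∃ C : ℝ, 0 < C ∧ ∀ ρ : ℝ, 0 < ρ →
      ∫⁻ x in ball (0 : EuclideanSpace ℝ (Fin n)) ρ, ENNReal.ofReal (gfun a b ‖x‖) ∂volume ≤
        ENNReal.ofReal (C * (ρ ^ (n:ℕ) * gfun a b ρ)) *
          volume (ball (0:EuclideanSpace ℝ (Fin n)) 1) := by
  haveI : Nonempty (Fin n) := ⟨⟨0, hn⟩⟩
  set E := EuclideanSpace ℝ (Fin n)
  haveI : Nontrivial E := inferInstance
  obtain ⟨C₂, hC₂1, hcomp⟩ := gfun_comp a b (K := 2) (by norm_num)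
  have hC₂0 : 0 < C₂ := lt_of_lt_of_le one_pos hC₂1
  set m : ℕ := ⌈b⌉₊
  set u : ℕ → ℝ := fun k => (((1/2:ℝ))^(k+1)) ^ a * ((k:ℝ) + 2) ^ m * ((1/2:ℝ)^k) ^ (n:ℕ)
    with hu
  have hu0 : ∀ k, 0 ≤ u k := fun k => by
    have : (0:ℝ) < ((1/2:ℝ)^(k+1)) ^ a := Real.rpow_pos_of_pos (by positivity) a
    positivity
  have hsum : Summable u := summable_u m n a ha
  set S := ∑' k, u k with hS
  have hS0 : 0 < S := by
    refine Summable.tsum_pos hsum hu0 0 ?_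
    have : (0:ℝ) < ((1/2:ℝ)^(0+1)) ^ a := Real.rpow_pos_of_pos (by positivity) a
    simp only [hu]
    positivity
  refine ⟨C₂ * S, by positivity, fun ρ hρ => ?_⟩
  set v₁ := volume (ball (0:E) 1) with hv₁
  set s : ℕ → ℝ := fun k => ρ * (1/2:ℝ)^k with hsdef
  have hspos : ∀ k, 0 < s k := fun k => by simp only [hsdef]; positivity
  have hgρ : 0 < gfun a b ρ := gfun_pos hρ a b
  set Lρ := Real.log (2 + ρ⁻¹) with hLρ
  have hLρ0 : 0 < Lρ := L_pos hρ.le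
  have hann : ∀ k : ℕ, (∫⁻ x in ball (0:E) (s k) \ ball 0 (s (k+1)),
      ENNReal.ofReal (gfun a b ‖x‖) ∂volume) ≤
        ENNReal.ofReal (C₂ * (ρ ^ (n:ℕ) * gfun a b ρ) * u k) * v₁ := by
    intro k
    have hmeas : MeasurableSet (ball (0:E) (s k) \ ball 0 (s (k+1))) :=
      measurableSet_ball.diff measurableSet_ball
    have hgsk1 : 0 < gfun a b (s (k+1)) := gfun_pos (hspos (k+1)) a b
    have hpt : ∀ x ∈ ball (0:E) (s k) \ ball 0 (s (k+1)),
        ENNReal.ofReal (gfun a b ‖x‖) ≤ ENNReal.ofReal (C₂ * gfun a b (s (k+1))) := by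
      intro x hx
      obtain ⟨hx1, hx2⟩ := hx
      rw [mem_ball_zero_iff] at hx1
      simp only [mem_ball_zero_iff, not_lt] at hx2
      have h2s : s k = 2 * s (k+1) := by
        simp only [hsdef, pow_succ]; ring
      apply ENNReal.ofReal_le_ofReal
      exact (hcomp (s (k+1)) ‖x‖ (hspos _) hx2 (by rw [← h2s]; exact hx1.le)).1
    have hreal : C₂ * gfun a b (s (k+1)) * s k ^ (n:ℕ) ≤
        C₂ * (ρ ^ (n:ℕ) * gfun a b ρ) * u k := by
      have h1 : (s (k+1)) ^ a = ρ ^ a * (((1/2:ℝ))^(k+1)) ^ a := by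
        simp only [hsdef]; exact Real.mul_rpow hρ.le (by positivity)
      have h2 : Real.log (2 + (s (k+1))⁻¹) ^ b ≤ ((k:ℝ)+2) ^ m * Lρ ^ b := by
        have h := Lb_dyadic b hρ (k+1)
        push_cast at h
        simp only [hsdef]
        calc Real.log (2 + (ρ * (1/2:ℝ)^(k+1))⁻¹) ^ b ≤ ((k:ℝ)+1+1) ^ m * Lρ ^ b := h
          _ = ((k:ℝ)+2) ^ m * Lρ ^ b := by
              have hb : (k:ℝ)+1+1 = (k:ℝ)+2 := by ring
              rw [hb]
      have hpa : (0:ℝ) < ((1/2:ℝ)^(k+1)) ^ a := Real.rpow_pos_of_pos (by positivity) a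
      have hρa : (0:ℝ) < ρ ^ a := Real.rpow_pos_of_pos hρ a
      have hgsk : gfun a b (s (k+1)) ≤
          ρ ^ a * ((1/2:ℝ)^(k+1)) ^ a * (((k:ℝ)+2) ^ m * Lρ ^ b) := by
        unfold gfun
        rw [h1]
        exact mul_le_mul_of_nonneg_left h2 (by positivity)
      have hsk : s k ^ (n:ℕ) = ρ ^ (n:ℕ) * ((1/2:ℝ)^k) ^ (n:ℕ) := by
        simp only [hsdef]; exact mul_pow _ _ _
      calc C₂ * gfun a b (s (k+1)) * s k ^ (n:ℕ)
          ≤ C₂ * (ρ ^ a * ((1/2:ℝ)^(k+1)) ^ a * (((k:ℝ)+2) ^ m * Lρ ^ b)) *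
              (ρ ^ (n:ℕ) * ((1/2:ℝ)^k) ^ (n:ℕ)) := by
            rw [hsk]
            apply mul_le_mul_of_nonneg_right
              (mul_le_mul_of_nonneg_left hgsk hC₂0.le) (by positivity)
        _ = C₂ * (ρ ^ (n:ℕ) * gfun a b ρ) * u k := by
            unfold gfun
            simp only [hu, ← hLρ]
            ring
    calc (∫⁻ x in ball (0:E) (s k) \ ball 0 (s (k+1)),
          ENNReal.ofReal (gfun a b ‖x‖) ∂volume)
        ≤ ∫⁻ _x in ball (0:E) (s k) \ ball 0 (s (k+1)),
            ENNReal.ofReal (C₂ * gfun a b (s (k+1))) ∂volume := setLIntegral_mono' hmeas hpt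
      _ = ENNReal.ofReal (C₂ * gfun a b (s (k+1))) *
            volume (ball (0:E) (s k) \ ball 0 (s (k+1))) := setLIntegral_const _ _
      _ ≤ ENNReal.ofReal (C₂ * gfun a b (s (k+1))) * volume (ball (0:E) (s k)) := by
          gcongr
          exact Set.diff_subset
      _ = ENNReal.ofReal (C₂ * gfun a b (s (k+1))) * (ENNReal.ofReal (s k ^ (n:ℕ)) * v₁) := by
          rw [Measure.addHaar_ball volume _ (hspos k).le, finrank_euclideanSpace_fin]
      _ = ENNReal.ofReal (C₂ * gfun a b (s (k+1)) * s k ^ (n:ℕ)) * v₁ := by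
          rw [← mul_assoc, ← ENNReal.ofReal_mul (mul_nonneg hC₂0.le hgsk1.le)]
      _ ≤ ENNReal.ofReal (C₂ * (ρ ^ (n:ℕ) * gfun a b ρ) * u k) * v₁ :=
          mul_le_mul_left (ENNReal.ofReal_le_ofReal hreal) v₁
  have hsub := ball_subset_annuli (X := E) hρ
  have hterm : ∀ k : ℕ, 0 ≤ C₂ * (ρ ^ (n:ℕ) * gfun a b ρ) * u k := fun k =>
    mul_nonneg (mul_nonneg hC₂0.le (mul_nonneg (pow_nonneg hρ.le _) hgρ.le)) (hu0 k)
  have hsum2 : Summable (fun k => C₂ * (ρ ^ (n:ℕ) * gfun a b ρ) * u k) := by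
    exact hsum.mul_left _
  calc (∫⁻ x in ball (0:E) ρ, ENNReal.ofReal (gfun a b ‖x‖) ∂volume)
      ≤ ∫⁻ x in {0} ∪ ⋃ k : ℕ, (ball (0:E) (s k) \ ball 0 (s (k+1))),
          ENNReal.ofReal (gfun a b ‖x‖) ∂volume := by
        apply lintegral_mono_set
        simpa only [hsdef] using hsub
    _ ≤ (∫⁻ x in ({0} : Set E), ENNReal.ofReal (gfun a b ‖x‖) ∂volume) +
        ∫⁻ x in ⋃ k : ℕ, (ball (0:E) (s k) \ ball 0 (s (k+1))),
          ENNReal.ofReal (gfun a b ‖x‖) ∂volume := lintegral_union_le _ _ _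
    _ ≤ 0 + ∑' k : ℕ, ∫⁻ x in ball (0:E) (s k) \ ball 0 (s (k+1)),
          ENNReal.ofReal (gfun a b ‖x‖) ∂volume := by
        apply add_le_add
        · exact le_of_eq (setLIntegral_measure_zero _ _ (measure_singleton 0))
        · exact lintegral_iUnion_le _ _
    _ ≤ ∑' k : ℕ, ENNReal.ofReal (C₂ * (ρ ^ (n:ℕ) * gfun a b ρ) * u k) * v₁ := by
        rw [zero_add]; exact ENNReal.tsum_le_tsum hann
    _ = (∑' k : ℕ, ENNReal.ofReal (C₂ * (ρ ^ (n:ℕ) * gfun a b ρ) * u k)) * v₁ :=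
        ENNReal.tsum_mul_right
    _ = ENNReal.ofReal (C₂ * S * (ρ ^ (n:ℕ) * gfun a b ρ)) * v₁ := by
        apply congrArg (· * v₁)
        rw [← ENNReal.ofReal_tsum_of_nonneg hterm hsum2]
        apply congrArg ENNReal.ofReal
        have : ∀ k : ℕ, C₂ * (ρ ^ (n:ℕ) * gfun a b ρ) * u k =
            (C₂ * (ρ ^ (n:ℕ) * gfun a b ρ)) * u k := fun k => rfl
        rw [tsum_congr this, hsum.tsum_mul_left, ← hS]
        ring

lemma gfun_nonneg {t : ℝ} (ht : 0 ≤ t) (a b : ℝ) : 0 ≤ gfun a b t := by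
  unfold gfun
  apply mul_nonneg (Real.rpow_nonneg ht a)
  apply Real.rpow_nonneg
  have : (0:ℝ) ≤ t⁻¹ := inv_nonneg.2 ht
  have h2 : (0:ℝ) < Real.log 2 := Real.log_pos (by norm_num)
  have := log_two_le_L ht
  linarith

lemma gfun_measurable (a b : ℝ) {E : Type*} [NormedAddCommGroup E] [MeasurableSpace E]
    [OpensMeasurableSpace E] : Measurable (fun x : E => gfun a b ‖x‖) := by
  unfold gfun
  apply Measurable.mul
  · exact measurable_norm.pow_const a
  · apply Measurable.pow_const
    apply Real.measurable_log.comp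
    exact (measurable_const.add measurable_norm.inv)

lemma exists_shift {n : ℕ} (hn : 0 < n) (x₀ : EuclideanSpace ℝ (Fin n)) {t : ℝ} (ht : 0 ≤ t) :
    ∃ y : EuclideanSpace ℝ (Fin n), ‖y - x₀‖ = t ∧ ‖y‖ = ‖x₀‖ + t := by
  rcases eq_or_ne x₀ 0 with rfl | h0
  · refine ⟨t • EuclideanSpace.single ⟨0, hn⟩ (1:ℝ), ?_, ?_⟩
    · rw [sub_zero, norm_smul, EuclideanSpace.norm_single]
      simp [abs_of_nonneg ht]
    · rw [norm_smul, EuclideanSpace.norm_single]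
      simp [abs_of_nonneg ht]
  · have hx : 0 < ‖x₀‖ := norm_pos_iff.2 h0
    refine ⟨(1 + t/‖x₀‖) • x₀, ?_, ?_⟩
    · have : (1 + t/‖x₀‖) • x₀ - x₀ = (t/‖x₀‖) • x₀ := by
        rw [add_smul, one_smul]; abel
      rw [this, norm_smul]
      rw [Real.norm_eq_abs, abs_of_nonneg (by positivity)]
      field_simp
    · rw [norm_smul, Real.norm_eq_abs, abs_of_nonneg (by positivity)]
      field_simp

set_option maxHeartbeats 1000000 in
lemma main_E {n : ℕ} (hn : 0 < n) (a b : ℝ) (ha : -(n:ℝ) < a) :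
    ∃ c₁ c₂ : ℝ, 0 < c₁ ∧ 0 < c₂ ∧ ∀ (x₀ : EuclideanSpace ℝ (Fin n)) (r : ℝ), 0 < r →
      c₁ * gfun a b (‖x₀‖ + r) ≤
        (volume (ball x₀ r)).toReal⁻¹ * ∫ x in ball x₀ r, gfun a b ‖x‖ ∂volume ∧
      (volume (ball x₀ r)).toReal⁻¹ * (∫ x in ball x₀ r, gfun a b ‖x‖ ∂volume) ≤
        c₂ * gfun a b (‖x₀‖ + r) := by
  haveI : Nonempty (Fin n) := ⟨⟨0, hn⟩⟩
  set E := EuclideanSpace ℝ (Fin n)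
  haveI : Nontrivial E := inferInstance
  obtain ⟨C₂, hC₂1, hcomp2⟩ := gfun_comp a b (K := 2) (by norm_num)
  obtain ⟨C₃, hC₃1, hcomp3⟩ := gfun_comp a b (K := 3) (by norm_num)
  obtain ⟨Ci, hCi0, hint⟩ := lintegral_gfun_ball hn a b ha
  have hC₂0 : (0:ℝ) < C₂ := lt_of_lt_of_le one_pos hC₂1
  have hC₃0 : (0:ℝ) < C₃ := lt_of_lt_of_le one_pos hC₃1
  set v₁ := volume (ball (0:E) 1) with hv₁
  have hv₁top : v₁ ≠ ⊤ := measure_ball_lt_top.ne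
  have hv₁0 : 0 < v₁.toReal := ENNReal.toReal_pos (measure_ball_pos volume 0 one_pos).ne' hv₁top
  refine ⟨(C₂ * C₂)⁻¹ * ((1:ℝ)/4) ^ (n:ℕ), Ci * 3 ^ (n:ℕ) + C₃ * C₃,
    by positivity, by positivity, ?_⟩
  intro x₀ r hr
  set R := ‖x₀‖ + r with hR
  have hx₀ : 0 ≤ ‖x₀‖ := norm_nonneg x₀
  have hR0 : 0 < R := by positivity
  have hgR : 0 < gfun a b R := gfun_pos hR0 a b
  have hvol : (volume (ball x₀ r)).toReal = r ^ (n:ℕ) * v₁.toReal := by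
    rw [Measure.addHaar_ball volume x₀ hr.le, finrank_euclideanSpace_fin,
      ENNReal.toReal_mul, ENNReal.toReal_ofReal (by positivity)]
  have hmeasW : Measurable (fun x : E => gfun a b ‖x‖) := gfun_measurable a b
  have hW0 : ∀ x : E, 0 ≤ gfun a b ‖x‖ := fun x => gfun_nonneg (norm_nonneg x) a b
  have hieq : ∀ s : Set E, (∫ x in s, gfun a b ‖x‖ ∂volume) =
      (∫⁻ x in s, ENNReal.ofReal (gfun a b ‖x‖) ∂volume).toReal := fun s => by
    rw [integral_eq_lintegral_of_nonneg_ae (ae_of_all _ hW0)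
      hmeasW.aestronglyMeasurable]
  have hsubR : ball x₀ r ⊆ ball (0:E) R := fun z hz => by
    rw [mem_ball, dist_eq_norm] at hz
    rw [mem_ball_zero_iff]
    calc ‖z‖ = ‖z - x₀ + x₀‖ := by rw [sub_add_cancel]
      _ ≤ ‖z - x₀‖ + ‖x₀‖ := norm_add_le _ _
      _ < r + ‖x₀‖ := by linarith
      _ = R := by rw [hR]; ring
  have htop : (∫⁻ x in ball x₀ r, ENNReal.ofReal (gfun a b ‖x‖) ∂volume) ≤
      ENNReal.ofReal (Ci * (R ^ (n:ℕ) * gfun a b R)) * v₁ :=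
    le_trans (lintegral_mono_set hsubR) (hint R hR0)
  have htopne : (∫⁻ x in ball x₀ r, ENNReal.ofReal (gfun a b ‖x‖) ∂volume) ≠ ⊤ :=
    (lt_of_le_of_lt htop (ENNReal.mul_lt_top ENNReal.ofReal_lt_top hv₁top.lt_top)).ne
  constructor
  · -- LOWER BOUND
    obtain ⟨y, hy1, hy2⟩ := exists_shift hn x₀ (show (0:ℝ) ≤ 3/4*r by positivity)
    have hsuby : ball y (r/4) ⊆ ball x₀ r := fun z hz => by
      rw [mem_ball, dist_eq_norm] at hz ⊢
      calc ‖z - x₀‖ = ‖z - y + (y - x₀)‖ := by rw [sub_add_sub_cancel]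
        _ ≤ ‖z - y‖ + ‖y - x₀‖ := norm_add_le _ _
        _ < r/4 + 3/4*r := by rw [hy1]; linarith
        _ = r := by ring
    have hptlow : ∀ z ∈ ball y (r/4),
        ENNReal.ofReal ((C₂ * C₂)⁻¹ * gfun a b R) ≤ ENNReal.ofReal (gfun a b ‖z‖) := by
      intro z hz
      rw [mem_ball, dist_eq_norm] at hz
      have hz1 : R/2 ≤ ‖z‖ := by
        have h := norm_sub_norm_le y z
        rw [norm_sub_rev y z, hy2] at h
        rw [hR]; linarith
      have hz2 : ‖z‖ ≤ R := by
        calc ‖z‖ = ‖z - y + y‖ := by rw [sub_add_cancel]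
          _ ≤ ‖z - y‖ + ‖y‖ := norm_add_le _ _
          _ ≤ r/4 + (‖x₀‖ + 3/4*r) := by rw [hy2]; linarith
          _ = R := by rw [hR]; ring
      apply ENNReal.ofReal_le_ofReal
      have h1 : gfun a b (R/2) ≤ C₂ * gfun a b ‖z‖ :=
        (hcomp2 (R/2) ‖z‖ (by positivity) hz1 (by linarith)).2
      have h2 : gfun a b R ≤ C₂ * gfun a b (R/2) :=
        (hcomp2 (R/2) R (by positivity) (by linarith) (by linarith)).1
      have hgz : 0 ≤ gfun a b ‖z‖ := hW0 z
      rw [inv_mul_le_iff₀ (by positivity)]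
      calc gfun a b R ≤ C₂ * (C₂ * gfun a b ‖z‖) := by nlinarith
        _ = C₂ * C₂ * gfun a b ‖z‖ := by ring
    have hlow : ENNReal.ofReal ((C₂ * C₂)⁻¹ * gfun a b R) * (ENNReal.ofReal ((r/4) ^ (n:ℕ)) * v₁)
        ≤ (∫⁻ x in ball x₀ r, ENNReal.ofReal (gfun a b ‖x‖) ∂volume) := by
      have heq : ENNReal.ofReal ((C₂ * C₂)⁻¹ * gfun a b R) * (ENNReal.ofReal ((r/4) ^ (n:ℕ)) * v₁)
          = ∫⁻ _x in ball y (r/4), ENNReal.ofReal ((C₂ * C₂)⁻¹ * gfun a b R) ∂volume := by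
        rw [setLIntegral_const, Measure.addHaar_ball volume y (by positivity : (0:ℝ) ≤ r/4),
          finrank_euclideanSpace_fin]
      rw [heq]
      calc (∫⁻ _x in ball y (r/4), ENNReal.ofReal ((C₂ * C₂)⁻¹ * gfun a b R) ∂volume)
          ≤ ∫⁻ x in ball y (r/4), ENNReal.ofReal (gfun a b ‖x‖) ∂volume :=
            setLIntegral_mono' measurableSet_ball hptlow
        _ ≤ _ := lintegral_mono_set hsuby
    have hlowR : (C₂ * C₂)⁻¹ * gfun a b R * ((r/4) ^ (n:ℕ) * v₁.toReal) ≤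
        ∫ x in ball x₀ r, gfun a b ‖x‖ ∂volume := by
      rw [hieq]
      have h := ENNReal.toReal_mono htopne hlow
      rwa [ENNReal.toReal_mul, ENNReal.toReal_mul, ENNReal.toReal_ofReal (by positivity),
        ENNReal.toReal_ofReal (by positivity)] at h
    rw [hvol]
    calc (C₂ * C₂)⁻¹ * ((1:ℝ)/4) ^ (n:ℕ) * gfun a b R
        = (r ^ (n:ℕ) * v₁.toReal)⁻¹ * ((C₂ * C₂)⁻¹ * gfun a b R * ((r/4) ^ (n:ℕ) * v₁.toReal)) := by
          rw [div_pow, div_pow]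
          field_simp
          try ring
      _ ≤ (r ^ (n:ℕ) * v₁.toReal)⁻¹ * ∫ x in ball x₀ r, gfun a b ‖x‖ ∂volume :=
          mul_le_mul_of_nonneg_left hlowR (by positivity)
  · -- UPPER BOUND
    rcases le_or_gt ‖x₀‖ (2*r) with hcase | hcase
    · have hR3 : R ≤ 3 * r := by rw [hR]; linarith
      have hup : (∫ x in ball x₀ r, gfun a b ‖x‖ ∂volume) ≤
          Ci * (R ^ (n:ℕ) * gfun a b R) * v₁.toReal := by
        rw [hieq]
        have h := ENNReal.toReal_mono (ENNReal.mul_ne_top ENNReal.ofReal_ne_top hv₁top) htop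
        rwa [ENNReal.toReal_mul, ENNReal.toReal_ofReal (by positivity)] at h
      rw [hvol]
      calc (r ^ (n:ℕ) * v₁.toReal)⁻¹ * ∫ x in ball x₀ r, gfun a b ‖x‖ ∂volume
          ≤ (r ^ (n:ℕ) * v₁.toReal)⁻¹ * (Ci * (R ^ (n:ℕ) * gfun a b R) * v₁.toReal) :=
            mul_le_mul_of_nonneg_left hup (by positivity)
        _ = Ci * (R / r) ^ (n:ℕ) * gfun a b R := by
            rw [div_pow]; field_simp
        _ ≤ Ci * 3 ^ (n:ℕ) * gfun a b R := by
            apply mul_le_mul_of_nonneg_right _ hgR.le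
            apply mul_le_mul_of_nonneg_left _ hCi0.le
            apply pow_le_pow_left₀ (by positivity)
            rw [div_le_iff₀ hr]; linarith
        _ ≤ (Ci * 3 ^ (n:ℕ) + C₃ * C₃) * gfun a b R := by nlinarith
    · have hptup : ∀ z ∈ ball x₀ r,
          ENNReal.ofReal (gfun a b ‖z‖) ≤ ENNReal.ofReal (C₃ * C₃ * gfun a b R) := by
        intro z hz
        rw [mem_ball, dist_eq_norm] at hz
        have hz2 : ‖z‖ ≤ R := by
          calc ‖z‖ = ‖z - x₀ + x₀‖ := by rw [sub_add_cancel]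
            _ ≤ ‖z - x₀‖ + ‖x₀‖ := norm_add_le _ _
            _ ≤ r + ‖x₀‖ := by linarith
            _ = R := by rw [hR]; ring
        have hz1 : R/3 ≤ ‖z‖ := by
          have h := norm_sub_norm_le x₀ z
          rw [norm_sub_rev x₀ z] at h
          rw [hR]; linarith
        apply ENNReal.ofReal_le_ofReal
        have h1 : gfun a b ‖z‖ ≤ C₃ * gfun a b (R/3) :=
          (hcomp3 (R/3) ‖z‖ (by positivity) hz1 (by linarith)).1
        have h2 : gfun a b (R/3) ≤ C₃ * gfun a b R := by
          have h3 := (hcomp3 (R/3) R (by positivity) (by linarith) (by linarith)).2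
          have hg3 : 0 ≤ gfun a b (R/3) := (gfun_pos (by positivity) a b).le
          nlinarith
        have hg3 : 0 ≤ gfun a b (R/3) := (gfun_pos (by positivity) a b).le
        nlinarith
      have hup : (∫ x in ball x₀ r, gfun a b ‖x‖ ∂volume) ≤
          C₃ * C₃ * gfun a b R * (volume (ball x₀ r)).toReal := by
        rw [hieq]
        have hle : (∫⁻ x in ball x₀ r, ENNReal.ofReal (gfun a b ‖x‖) ∂volume) ≤
            ENNReal.ofReal (C₃ * C₃ * gfun a b R) * volume (ball x₀ r) := by
          calc (∫⁻ x in ball x₀ r, ENNReal.ofReal (gfun a b ‖x‖) ∂volume)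
              ≤ ∫⁻ _x in ball x₀ r, ENNReal.ofReal (C₃ * C₃ * gfun a b R) ∂volume :=
                setLIntegral_mono' measurableSet_ball hptup
            _ = ENNReal.ofReal (C₃ * C₃ * gfun a b R) * volume (ball x₀ r) :=
                setLIntegral_const _ _
        have hfin : ENNReal.ofReal (C₃ * C₃ * gfun a b R) * volume (ball x₀ r) ≠ ⊤ :=
          ENNReal.mul_ne_top ENNReal.ofReal_ne_top measure_ball_lt_top.ne
        have h := ENNReal.toReal_mono hfin hle
        rwa [ENNReal.toReal_mul, ENNReal.toReal_ofReal (by positivity)] at h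
      have hvolpos : 0 < (volume (ball x₀ r)).toReal := by rw [hvol]; positivity
      calc (volume (ball x₀ r)).toReal⁻¹ * ∫ x in ball x₀ r, gfun a b ‖x‖ ∂volume
          ≤ (volume (ball x₀ r)).toReal⁻¹ *
              (C₃ * C₃ * gfun a b R * (volume (ball x₀ r)).toReal) :=
            mul_le_mul_of_nonneg_left hup (by positivity)
        _ = C₃ * C₃ * gfun a b R := by field_simp
        _ ≤ (Ci * 3 ^ (n:ℕ) + C₃ * C₃) * gfun a b R := by
            have h3 : (0:ℝ) < 3 ^ (n:ℕ) := by positivity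
            nlinarith [mul_pos (mul_pos hCi0 h3) hgR]


/-- For `a ∈ (-n,∞)`, `b ∈ ℝ` and `w(x) = |x|^a (log(2+|x|⁻¹))^b`, the ball average
`⨍_{B(x₀,r)} w` is comparable to `(|x₀|+r)^a (log(2+(|x₀|+r)⁻¹))^b`, with constants
depending only on `n, a, b`. -/
theorem ball_average_comparable {n : ℕ} (hn : 0 < n) (a b : ℝ) (ha : -(n : ℝ) < a) :
    ∃ c₁ c₂ : ℝ, 0 < c₁ ∧ 0 < c₂ ∧ ∀ (x₀ : Fin n → ℝ) (r : ℝ), 0 < r →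
      c₁ * ((euclNorm x₀ + r) ^ a * Real.log (2 + (euclNorm x₀ + r)⁻¹) ^ b) ≤
        (⨍ x in euclBall x₀ r, euclNorm x ^ a * Real.log (2 + (euclNorm x)⁻¹) ^ b) ∧
      (⨍ x in euclBall x₀ r, euclNorm x ^ a * Real.log (2 + (euclNorm x)⁻¹) ^ b) ≤
        c₂ * ((euclNorm x₀ + r) ^ a * Real.log (2 + (euclNorm x₀ + r)⁻¹) ^ b) := by
  obtain ⟨c₁, c₂, hc₁, hc₂, H⟩ := main_E hn a b ha
  refine ⟨c₁, c₂, hc₁, hc₂, ?_⟩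
  intro x₀ r hr
  set φ := (MeasurableEquiv.toLp 2 (Fin n → ℝ)).symm with hφdef
  have hφ : MeasurePreserving φ volume volume :=
    EuclideanSpace.volume_preserving_symm_measurableEquiv_toLp (Fin n)
  set x₀' := φ.symm x₀ with hx₀'
  have hnorm : ∀ z : Fin n → ℝ, euclNorm z = ‖(φ.symm z : EuclideanSpace ℝ (Fin n))‖ := by
    intro z
    rw [EuclideanSpace.norm_eq]
    unfold euclNorm
    congr 1
    apply Finset.sum_congr rfl
    intro i _
    rw [Real.norm_eq_abs, sq_abs]
    rfl
  have hsubφ : ∀ y : Fin n → ℝ, φ.symm (y - x₀) = φ.symm y - x₀' := by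
    intro y
    rw [hx₀']
    rfl
  have hball : euclBall x₀ r = φ.symm ⁻¹' (ball x₀' r) := by
    ext y
    simp only [euclBall, Set.mem_setOf_eq, Set.mem_preimage, Metric.mem_ball, dist_eq_norm]
    rw [hnorm, hsubφ]
  have hballim : euclBall x₀ r = φ '' (ball x₀' r) := by
    rw [hball]
    exact (MeasurableEquiv.image_eq_preimage_symm φ (ball x₀' r)).symm
  have hmeasvol : volume (euclBall x₀ r) = volume (ball x₀' r) := by
    rw [hball]
    exact (hφ.symm φ).measure_preimage measurableSet_ball.nullMeasurableSet
  have hintid : (∫ x in euclBall x₀ r, euclNorm x ^ a * Real.log (2 + (euclNorm x)⁻¹) ^ b) =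
      ∫ z in ball x₀' r, gfun a b ‖z‖ ∂volume := by
    rw [hballim, hφ.setIntegral_image_emb φ.measurableEmbedding
      (fun y => euclNorm y ^ a * Real.log (2 + (euclNorm y)⁻¹) ^ b) (ball x₀' r)]
    apply setIntegral_congr_fun measurableSet_ball
    intro z _
    have hz : euclNorm (φ z) = ‖z‖ := by rw [hnorm, MeasurableEquiv.symm_apply_apply]
    show euclNorm (φ z) ^ a * Real.log (2 + (euclNorm (φ z))⁻¹) ^ b = gfun a b ‖z‖
    rw [hz]
    rfl
  have havg : (⨍ x in euclBall x₀ r, euclNorm x ^ a * Real.log (2 + (euclNorm x)⁻¹) ^ b) =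
      (volume (ball x₀' r)).toReal⁻¹ * ∫ z in ball x₀' r, gfun a b ‖z‖ ∂volume := by
    rw [setAverage_eq, measureReal_def, hmeasvol, hintid, smul_eq_mul]
  have hgoalval : (euclNorm x₀ + r) ^ a * Real.log (2 + (euclNorm x₀ + r)⁻¹) ^ b =
      gfun a b (‖x₀'‖ + r) := by
    rw [hnorm x₀]
    rfl
  rw [havg, hgoalval]
  exact H x₀' r hr
end
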